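/- Let y : [0,T) → ℝ be continuous nonnegative and satisfy y(t) ≤ y(0) + C ∫₀ᵗ (1 + g(τ)) · ln(e + y(τ)) dτ for all t ∈ [0,T), where g ≥ 0 is integrable on [0,T). Then y(t) ≤ (e + y(0))^{exp(C ∫₀ᵗ (1 + g(τ)) dτ)} − e for all t ∈ [0,T); in particular y stays bounded if ∫₀ᵀ g dτ < ∞. -/

import Mathlib

open MeasureTheory intervalIntegral Set

/-- Key FTC-type inequality, proved via partitions (no chain rule needed). -/
lemma key_lemma (a b : ℝ) (hab : a ≤ b) (h θ Θ : ℝ → ℝ)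
    (hint : IntegrableOn h (Set.Icc a b))
    (hnn : ∀ x ∈ Set.Icc a b, 0 ≤ h x)
    (hθc : Continuous θ) (hθm : Monotone θ)
    (hconv : ∀ x₁ x₂ : ℝ, x₁ ≤ x₂ → θ x₁ * (x₂ - x₁) ≤ Θ x₂ - Θ x₁) :
    ∫ x in a..b, h x * θ (∫ u in a..x, h u) ≤ Θ (∫ u in a..b, h u) - Θ 0 := by
  set A : ℝ → ℝ := fun x => ∫ u in a..x, h u with hA
  have hii : ∀ u v, a ≤ u → u ≤ v → v ≤ b → IntervalIntegrable h volume u v := by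
    intro u v hu huv hv
    exact (hint.mono_set (Set.uIcc_subset_Icc ⟨hu, huv.trans hv⟩
      ⟨hu.trans huv, hv⟩)).intervalIntegrable
  have hAd : ∀ u v, a ≤ u → u ≤ v → v ≤ b → A v - A u = ∫ x in u..v, h x := by
    intro u v hu huv hv
    exact integral_interval_sub_left (hii a v le_rfl (hu.trans huv) hv)
      (hii a u le_rfl hu (huv.trans hv))
  have hAmono : ∀ u v, a ≤ u → u ≤ v → v ≤ b → A u ≤ A v := by
    intro u v hu huv hv
    have h0 : (0:ℝ) ≤ ∫ x in u..v, h x :=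
      intervalIntegral.integral_nonneg huv (fun x hx =>
        hnn x ⟨hu.trans hx.1, hx.2.trans hv⟩)
    have := hAd u v hu huv hv
    linarith
  have hA0 : A a = 0 := intervalIntegral.integral_same
  have hAcont : ContinuousOn A (Set.Icc a b) := by
    have := intervalIntegral.continuousOn_primitive_interval
      (μ := volume) (a := a) (b := b) (f := h) (by rwa [Set.uIcc_of_le hab])
    rwa [Set.uIcc_of_le hab] at this
  -- integrability of the full integrand
  have hFint : IntegrableOn (fun x => θ (A x) * h x) (Set.Icc a b) :=
    IntegrableOn.continuousOn_mul (hθc.comp_continuousOn hAcont) hint isCompact_Icc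
  have hFii : ∀ u v, a ≤ u → u ≤ v → v ≤ b →
      IntervalIntegrable (fun x => h x * θ (A x)) volume u v := by
    intro u v hu huv hv
    have : IntegrableOn (fun x => θ (A x) * h x) (Set.uIcc u v) :=
      hFint.mono_set (Set.uIcc_subset_Icc ⟨hu, huv.trans hv⟩ ⟨hu.trans huv, hv⟩)
    exact (this.congr_fun (fun x _ => mul_comm _ _) measurableSet_uIcc).intervalIntegrable
  -- main estimate via ε
  refine le_of_forall_pos_le_add (fun ε hε => ?_)
  set M : ℝ := θ (A b) - θ (A a) + 1 with hM
  have hMpos : 0 < M := by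
    have := hθm (hAmono a b le_rfl hab le_rfl)
    simp only [hM]; linarith
  set ε' : ℝ := ε / M with hε'
  have hε'pos : 0 < ε' := div_pos hε hMpos
  -- uniform continuity of A on [a,b]
  obtain ⟨δ, hδpos, hδ⟩ : ∃ δ > 0, ∀ u ∈ Set.Icc a b, ∀ v ∈ Set.Icc a b,
      dist u v < δ → dist (A u) (A v) < ε' := by
    have := (isCompact_Icc.uniformContinuousOn_of_continuous hAcont)
    rw [Metric.uniformContinuousOn_iff] at this
    obtain ⟨δ, hδpos, H⟩ := this ε' hε'pos
    exact ⟨δ, hδpos, fun u hu v hv hd => H u hu v hv hd⟩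
  -- choose n
  obtain ⟨n, hn⟩ := exists_nat_gt ((b - a) / δ)
  have hnpos : 0 < (n:ℝ) := lt_of_le_of_lt (div_nonneg (by linarith) hδpos.le) hn
  set t : ℕ → ℝ := fun k => a + k * ((b - a) / n) with ht
  have hstep : 0 ≤ (b - a) / n := div_nonneg (by linarith) hnpos.le
  have htmono : ∀ k : ℕ, t k ≤ t (k+1) := by
    intro k
    simp only [ht, Nat.cast_succ]
    nlinarith
  have ht0 : t 0 = a := by simp [ht]
  have htn : t n = b := by
    have : (n:ℝ) ≠ 0 := ne_of_gt hnpos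
    simp only [ht]; rw [mul_div_assoc', mul_div_cancel_left₀ _ this]
    ring
  have htmem : ∀ k : ℕ, k ≤ n → t k ∈ Set.Icc a b := by
    intro k hk
    constructor
    · simp only [ht]
      nlinarith [mul_nonneg (Nat.cast_nonneg k) hstep]
    · have : (k:ℝ) * ((b-a)/n) ≤ (n:ℝ) * ((b-a)/n) := by
        apply mul_le_mul_of_nonneg_right (by exact_mod_cast hk) hstep
      have h2 : (n:ℝ) * ((b-a)/n) = b - a := by field_simp
      simp only [ht]; linarith [this, h2.le]
  have htdiff : ∀ k : ℕ, t (k+1) - t k = (b - a)/n := by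
    intro k; simp only [ht, Nat.cast_succ]; ring
  have hmesh : (b - a)/n < δ := by
    rw [div_lt_iff₀ hnpos]
    rw [div_lt_iff₀ hδpos] at hn
    nlinarith
  -- split the integral
  have hsplit : ∫ x in a..b, h x * θ (A x) =
      ∑ k ∈ Finset.range n, ∫ x in (t k)..(t (k+1)), h x * θ (A x) := by
    rw [intervalIntegral.sum_integral_adjacent_intervals (fun k hk =>
      hFii (t k) (t (k+1)) (htmem k hk.le).1 (htmono k) (htmem (k+1) hk).2)]
    rw [ht0, htn]
  rw [show (∫ u in a..b, h u) = A b from rfl, hsplit]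
  -- bound each summand
  have hterm : ∀ k < n, ∫ x in (t k)..(t (k+1)), h x * θ (A x) ≤
      (Θ (A (t (k+1))) - Θ (A (t k))) + (θ (A (t (k+1))) - θ (A (t k))) * ε' := by
    intro k hk
    have hk1 := htmem k hk.le
    have hk2 := htmem (k+1) hk
    have hmono := htmono k
    have step1 : ∫ x in (t k)..(t (k+1)), h x * θ (A x) ≤
        ∫ x in (t k)..(t (k+1)), h x * θ (A (t (k+1))) := by
      apply intervalIntegral.integral_mono_on hmono
        (hFii _ _ hk1.1 hmono hk2.2)
        (((hii _ _ hk1.1 hmono hk2.2)).mul_const _)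
      intro x hx
      have hxm : x ∈ Set.Icc a b := ⟨hk1.1.trans hx.1, hx.2.trans hk2.2⟩
      exact mul_le_mul_of_nonneg_left
        (hθm (hAmono x (t (k+1)) hxm.1 hx.2 hk2.2)) (hnn x hxm)
    have step2 : ∫ x in (t k)..(t (k+1)), h x * θ (A (t (k+1))) =
        θ (A (t (k+1))) * (A (t (k+1)) - A (t k)) := by
      rw [intervalIntegral.integral_mul_const, hAd _ _ hk1.1 hmono hk2.2]
      ring
    have hΔnn : 0 ≤ A (t (k+1)) - A (t k) := by
      have := hAmono _ _ hk1.1 hmono hk2.2; linarith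
    have hΔle : A (t (k+1)) - A (t k) ≤ ε' := by
      have := hδ (t (k+1)) hk2 (t k) hk1 (by
        rw [Real.dist_eq, abs_of_nonneg (by linarith [htmono k]), htdiff k]; exact hmesh)
      rw [Real.dist_eq] at this
      calc A (t (k+1)) - A (t k) ≤ |A (t (k+1)) - A (t k)| := le_abs_self _
        _ ≤ ε' := this.le
    have hθle : θ (A (t k)) ≤ θ (A (t (k+1))) :=
      hθm (hAmono _ _ hk1.1 hmono hk2.2)
    have step3 : θ (A (t (k+1))) * (A (t (k+1)) - A (t k)) ≤
        (Θ (A (t (k+1))) - Θ (A (t k))) + (θ (A (t (k+1))) - θ (A (t k))) * ε' := by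
      have hc := hconv (A (t k)) (A (t (k+1))) (hAmono _ _ hk1.1 hmono hk2.2)
      nlinarith
    linarith [step1, step2.le, step2.ge, step3]
  calc ∑ k ∈ Finset.range n, ∫ x in (t k)..(t (k+1)), h x * θ (A x)
      ≤ ∑ k ∈ Finset.range n, ((Θ (A (t (k+1))) - Θ (A (t k)))
          + (θ (A (t (k+1))) - θ (A (t k))) * ε') :=
        Finset.sum_le_sum (fun k hk => hterm k (Finset.mem_range.1 hk))
    _ = (Θ (A (t n)) - Θ (A (t 0))) + (θ (A (t n)) - θ (A (t 0))) * ε' := by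
        rw [Finset.sum_add_distrib, Finset.sum_range_sub (fun k => Θ (A (t k))),
          ← Finset.sum_mul, Finset.sum_range_sub (fun k => θ (A (t k)))]
    _ ≤ Θ (A b) - Θ 0 + ε := by
        rw [ht0, htn, hA0]
        have hθ0 : θ (A a) = θ 0 := by rw [hA0]
        have hMε : M * ε' = ε := by
          rw [hε']; field_simp
        have h1 : (θ (A b) - θ 0) * ε' ≤ ε := by
          have h2 : (θ (A b) - θ 0) * ε' ≤ M * ε' := by
            apply mul_le_mul_of_nonneg_right _ hε'pos.le
            simp only [hM, ← hθ0]; linarith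
          linarith [hMε.le, hMε.ge, h2]
        rw [← hA0]
        rw [hA0]
        linarith [h1]

/-- logarithmic Gronwall inequality. If `y` is continuous and nonnegative
on `[0,T)` and satisfies `y t ≤ y 0 + C ∫₀ᵗ (1 + g τ) log(e + y τ) dτ` with `g ≥ 0`
integrable, then `y t ≤ (e + y 0)^{exp(C ∫₀ᵗ (1+g))} − e` on `[0,T)`. -/
theorem stmt2 (C T : ℝ) (hC : 0 < C) (hT : 0 < T) (y g : ℝ → ℝ)
    (hy_cont : ContinuousOn y (Set.Ico 0 T))
    (hy_nn : ∀ t ∈ Set.Ico (0:ℝ) T, 0 ≤ y t)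
    (hg_nn : ∀ t ∈ Set.Ico (0:ℝ) T, 0 ≤ g t)
    (hg_int : IntegrableOn g (Set.Ico 0 T))
    (hineq : ∀ t ∈ Set.Ico (0:ℝ) T,
      y t ≤ y 0 + C * ∫ τ in (0:ℝ)..t, (1 + g τ) * Real.log (Real.exp 1 + y τ)) :
    ∀ t ∈ Set.Ico (0:ℝ) T,
      y t ≤ (Real.exp 1 + y 0) ^ (Real.exp (C * ∫ τ in (0:ℝ)..t, (1 + g τ)))
              - Real.exp 1 := by
  intro t ht
  obtain ⟨ht0, htT⟩ := ht
  have hy0 : 0 ≤ y 0 := hy_nn 0 ⟨le_rfl, hT⟩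
  have hsub : Set.Icc 0 t ⊆ Set.Ico 0 T := fun τ hτ => ⟨hτ.1, lt_of_le_of_lt hτ.2 htT⟩
  have h1g_int : IntegrableOn (fun τ => 1 + g τ) (Set.Icc 0 t) := by
    apply Integrable.add
    · exact integrableOn_const (by rw [Real.volume_Icc]; exact ENNReal.ofReal_ne_top)
    · exact hg_int.mono_set hsub
  have h1g_nn : ∀ τ ∈ Set.Icc 0 t, 0 ≤ 1 + g τ := fun τ hτ => by linarith [hg_nn τ (hsub hτ)]
  set A : ℝ → ℝ := fun s => ∫ τ in (0:ℝ)..s, (1 + g τ) with hA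
  have hAcont : ContinuousOn A (Set.Icc 0 t) := by
    have := intervalIntegral.continuousOn_primitive_interval
      (μ := volume) (a := (0:ℝ)) (b := t) (f := fun τ => 1 + g τ) (by rwa [Set.uIcc_of_le ht0])
    rwa [Set.uIcc_of_le ht0] at this
  set p : ℝ := Real.exp (C * A t) with hp
  suffices hmain : ∀ ε > 0, y t ≤ (Real.exp 1 + y 0 + ε) ^ p - Real.exp 1 by
    have hbase : (0:ℝ) < Real.exp 1 + y 0 := by linarith [Real.exp_pos 1]
    have h1 : Filter.Tendsto (fun ε : ℝ => Real.exp 1 + y 0 + ε)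
        (nhdsWithin 0 (Set.Ioi 0)) (nhds (Real.exp 1 + y 0)) := by
      have hc : Continuous (fun ε : ℝ => Real.exp 1 + y 0 + ε) := by continuity
      have := (hc.tendsto 0).mono_left (nhdsWithin_le_nhds (s := Set.Ioi (0:ℝ)))
      simpa using this
    have h2 := ((Real.continuousAt_rpow_const (Real.exp 1 + y 0) p
      (Or.inl hbase.ne')).tendsto.comp h1).sub (tendsto_const_nhds (x := Real.exp 1))
    exact ge_of_tendsto h2 (by
      filter_upwards [self_mem_nhdsWithin] with ε hε using hmain ε hε)
  intro ε hε
  set K : ℝ := Real.exp 1 + y 0 + ε with hK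
  have hKpos : (0:ℝ) < K := by have := Real.exp_pos 1; simp only [hK]; linarith
  have hKgt : Real.exp 1 < K := by simp only [hK]; linarith
  set L : ℝ := Real.log K with hL
  have hL1 : 1 < L := by
    have := Real.log_lt_log (Real.exp_pos 1) hKgt
    rwa [Real.log_exp] at this
  set b : ℝ → ℝ := fun s => Real.exp (L * Real.exp (C * A s)) with hb
  -- Step A: supersolution property
  have hsupersol : ∀ s ∈ Set.Icc 0 t,
      K + C * ∫ τ in (0:ℝ)..s, (1 + g τ) * Real.log (b τ) ≤ b s := by
    intro s hs
    have hIccsub : Set.Icc (0:ℝ) s ⊆ Set.Icc 0 t := Set.Icc_subset_Icc_right hs.2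
    have hkey := key_lemma 0 s hs.1 (fun τ => C * (1 + g τ))
      (fun x => L * Real.exp x) (fun x => Real.exp (L * Real.exp x))
      ((h1g_int.mono_set hIccsub).const_mul C)
      (fun x hx => mul_nonneg hC.le (h1g_nn x (hIccsub hx)))
      (continuous_const.mul Real.continuous_exp)
      (fun x₁ x₂ hx => mul_le_mul_of_nonneg_left (Real.exp_le_exp.2 hx) (by linarith))
      ?conv
    case conv =>
      intro x₁ x₂ hx
      rcases eq_or_lt_of_le hx with rfl | hlt
      · simp
      · obtain ⟨c, hc, hslope⟩ := exists_hasDerivAt_eq_slope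
          (fun x => Real.exp (L * Real.exp x))
          (fun x => Real.exp (L * Real.exp x) * (L * Real.exp x)) hlt
          (Continuous.continuousOn (by continuity))
          (fun x _ => ((Real.hasDerivAt_exp x).const_mul L).exp)
        rw [eq_div_iff (sub_ne_zero.2 (ne_of_gt hlt))] at hslope
        have e1 : Real.exp x₁ ≤ Real.exp c := Real.exp_le_exp.2 hc.1.le
        have e2 : (1:ℝ) ≤ Real.exp (L * Real.exp c) :=
          Real.one_le_exp (by positivity)
        have e3 : (0:ℝ) < Real.exp c := Real.exp_pos c
        have m1 : L * Real.exp x₁ ≤ L * Real.exp c :=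
          mul_le_mul_of_nonneg_left e1 (by linarith)
        have m2 : L * Real.exp c ≤ Real.exp (L * Real.exp c) * (L * Real.exp c) :=
          le_mul_of_one_le_left (mul_nonneg (by linarith) e3.le) e2
        calc L * Real.exp x₁ * (x₂ - x₁)
            ≤ (Real.exp (L * Real.exp c) * (L * Real.exp c)) * (x₂ - x₁) :=
              mul_le_mul_of_nonneg_right (m1.trans m2) (by linarith)
          _ = _ := hslope
    -- rewrite hkey
    simp only [intervalIntegral.integral_const_mul] at hkey
    have hΘ0 : Real.exp (L * Real.exp (C * (∫ u in (0:ℝ)..(0:ℝ), (1 + g u)))) = K := by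
      rw [intervalIntegral.integral_same]
      simp [hL, Real.exp_log hKpos]
    have hLHS : C * ∫ τ in (0:ℝ)..s, (1 + g τ) * Real.log (b τ)
        = ∫ x in (0:ℝ)..s, C * (1 + g x) * (L * Real.exp (C * A x)) := by
      rw [← intervalIntegral.integral_const_mul]
      apply intervalIntegral.integral_congr
      intro x hx
      simp only [hb, Real.log_exp]
      ring
    rw [hLHS]
    have hΘ0 : Real.exp (L * Real.exp 0) = K := by
      rw [Real.exp_zero, mul_one, hL, Real.exp_log hKpos]
    rw [hΘ0] at hkey
    simp only [hb]
    simp only [hA] at hkey ⊢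
    linarith [hkey]
  -- Step B: comparison
  set B : ℝ → ℝ := fun s => b s - Real.exp 1 with hB
  have hbB : ∀ s, Real.exp 1 + B s = b s := fun s => by simp only [hB]; ring
  have hycont' : ContinuousOn y (Set.Icc 0 t) := hy_cont.mono hsub
  have hbcont : ContinuousOn b (Set.Icc 0 t) := by
    simp only [hb]
    exact Real.continuous_exp.comp_continuousOn (continuousOn_const.mul
      (Real.continuous_exp.comp_continuousOn (continuousOn_const.mul hAcont)))
  have hBcont : ContinuousOn B (Set.Icc 0 t) := by
    simp only [hB]; exact hbcont.sub continuousOn_const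
  have hcomp : ∀ s ∈ Set.Icc 0 t, y s ≤ B s := by
    by_contra hcon
    push_neg at hcon
    obtain ⟨s₁, hs₁mem, hs₁⟩ := hcon
    set U : Set ℝ := {s | s ∈ Set.Icc 0 t ∧ B s < y s} with hU
    have hUne : U.Nonempty := ⟨s₁, hs₁mem, hs₁⟩
    have hUbdd : BddBelow U := ⟨0, fun u hu => hu.1.1⟩
    set s₀ : ℝ := sInf U with hs₀def
    have hs₀mem : s₀ ∈ Set.Icc 0 t :=
      ⟨le_csInf hUne (fun u hu => hu.1.1),
        (csInf_le hUbdd ⟨hs₁mem, hs₁⟩).trans hs₁mem.2⟩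
    have hyB : B s₀ ≤ y s₀ := by
      obtain ⟨u, huU, hulim⟩ := mem_closure_iff_seq_limit.1 (csInf_mem_closure hUne hUbdd)
      have hc : ContinuousWithinAt (fun s => y s - B s) (Set.Icc 0 t) s₀ :=
        (hycont'.sub hBcont) s₀ hs₀mem
      have htend : Filter.Tendsto (fun n => y (u n) - B (u n)) Filter.atTop
          (nhds (y s₀ - B s₀)) := by
        apply hc.tendsto.comp
        apply tendsto_nhdsWithin_of_tendsto_nhds_of_eventually_within _ hulim
        exact Filter.Eventually.of_forall (fun n => (huU n).1)
      have h0 : 0 ≤ y s₀ - B s₀ :=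
        ge_of_tendsto htend (Filter.Eventually.of_forall (fun n => (sub_pos.2 (huU n).2).le))
      linarith
    have hbelow : ∀ τ, τ ∈ Set.Icc 0 t → τ < s₀ → y τ ≤ B τ := by
      intro τ hτ hlt
      by_contra hc
      exact absurd (csInf_le hUbdd ⟨hτ, lt_of_not_ge hc⟩) (not_le.2 hlt)
    have hs₀0 : (0:ℝ) ≤ s₀ := hs₀mem.1
    have hIccs₀ : Set.Icc (0:ℝ) s₀ ⊆ Set.Icc 0 t := Set.Icc_subset_Icc_right hs₀mem.2
    have toII : ∀ {f : ℝ → ℝ}, IntegrableOn f (Set.Icc 0 s₀) volume →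
        IntervalIntegrable f volume 0 s₀ := by
      intro f hf
      rw [intervalIntegrable_iff_integrableOn_Ioc_of_le hs₀0]
      exact hf.mono_set Set.Ioc_subset_Icc_self
    have hlogy : ContinuousOn (fun τ => Real.log (Real.exp 1 + y τ)) (Set.Icc 0 t) := by
      apply ContinuousOn.log (continuousOn_const.add hycont')
      intro τ hτ
      have h1 := hy_nn τ (hsub hτ)
      have h2 := Real.exp_pos 1
      exact ne_of_gt (by show 0 < Real.exp 1 + y τ; linarith)
    have hint1 : IntervalIntegrable (fun τ => (1 + g τ) * Real.log (Real.exp 1 + y τ))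
        volume 0 s₀ :=
      toII ((h1g_int.mono_set hIccs₀).mul_continuousOn (hlogy.mono hIccs₀) isCompact_Icc)
    have hlogb : ContinuousOn (fun τ => Real.log (b τ)) (Set.Icc 0 t) :=
      ContinuousOn.log hbcont (fun τ hτ => by simp only [hb]; exact ne_of_gt (Real.exp_pos _))
    have hint2 : IntervalIntegrable (fun τ => (1 + g τ) * Real.log (b τ)) volume 0 s₀ :=
      toII ((h1g_int.mono_set hIccs₀).mul_continuousOn (hlogb.mono hIccs₀) isCompact_Icc)
    have hmono : (∫ τ in (0:ℝ)..s₀, (1 + g τ) * Real.log (Real.exp 1 + y τ)) ≤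
        ∫ τ in (0:ℝ)..s₀, (1 + g τ) * Real.log (b τ) := by
      apply intervalIntegral.integral_mono_ae_restrict hs₀0 hint1 hint2
      have hne : ∀ᵐ τ ∂(volume : Measure ℝ), τ ≠ s₀ := by
        rw [MeasureTheory.ae_iff]
        have heq : {τ : ℝ | ¬ τ ≠ s₀} = {s₀} := by ext τ; simp
        rw [heq]
        exact measure_singleton s₀
      filter_upwards [MeasureTheory.ae_restrict_mem measurableSet_Icc,
        MeasureTheory.ae_restrict_of_ae hne] with τ hτ hne'
      have hτt : τ ∈ Set.Icc 0 t := hIccs₀ hτ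
      have hlt : τ < s₀ := lt_of_le_of_ne hτ.2 hne'
      have hyB' : y τ ≤ B τ := hbelow τ hτt hlt
      have hypos : 0 < Real.exp 1 + y τ := by
        linarith [hy_nn τ (hsub hτt), Real.exp_pos 1]
      have hle : Real.exp 1 + y τ ≤ b τ := by
        have := hbB τ; linarith
      exact mul_le_mul_of_nonneg_left (Real.log_le_log hypos hle) (h1g_nn τ hτt)
    have hss := hsupersol s₀ hs₀mem
    have hiq := hineq s₀ (hsub hs₀mem)
    have hCm := mul_le_mul_of_nonneg_left hmono hC.le
    have hbBs := hbB s₀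
    linarith [hyB, hε, hK.le, hK.ge]
  -- Step C: conclude for t
  have hfin := hcomp t ⟨ht0, le_rfl⟩
  have hKp : K ^ p = b t := by
    simp only [hb, hL, hp]
    rw [Real.rpow_def_of_pos hKpos]
  rw [hKp]
  have := hbB t
  linarith [hfin]
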